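/- Let φ ~ N(0, I_N) be a standard Gaussian vector in ℝ^N, ξ ~ Uniform([0, δ]) independent of φ, and Q_δ(λ) = δ⌊λ/δ⌋ the uniform quantizer with bin width δ > 0. Then for any u, v ∈ ℝ^N, E|Q_δ(⟨φ,u⟩ + ξ) − Q_δ(⟨φ,v⟩ + ξ)| = √(2/π)·‖u − v‖₂. -/

import Mathlib

open scoped ENNReal NNReal
open Real MeasureTheory ProbabilityTheory intervalIntegral

section DitherAux
open Set Filter MeasureTheory.Measure


lemma floor_ii (x a b : ℝ) :
    IntervalIntegrable (fun u : ℝ => ((⌊x + u⌋ : ℤ) : ℝ)) volume a b := by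
  have h : Monotone (fun u : ℝ => ((⌊x + u⌋ : ℤ) : ℝ)) := fun s t hst => by
    simp only []
    exact_mod_cast Int.floor_le_floor (by linarith : x + s ≤ x + t)
  exact (h.monotoneOn _).intervalIntegrable

lemma floor_int_01 (x : ℝ) : ∫ u in (0:ℝ)..1, ((⌊x + u⌋ : ℤ) : ℝ) = x := by
  have hf0 : 0 ≤ Int.fract x := Int.fract_nonneg x
  have hf1 : Int.fract x < 1 := Int.fract_lt_one x
  have key : ∫ u in (0:ℝ)..1, ((⌊Int.fract x + u⌋ : ℤ) : ℝ) = Int.fract x := by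
    have hsplit : ∫ u in (0:ℝ)..1, ((⌊Int.fract x + u⌋ : ℤ) : ℝ)
        = (∫ u in (0:ℝ)..(1 - Int.fract x), ((⌊Int.fract x + u⌋ : ℤ) : ℝ))
          + ∫ u in (1 - Int.fract x)..1, ((⌊Int.fract x + u⌋ : ℤ) : ℝ) :=
      (integral_add_adjacent_intervals (floor_ii _ _ _) (floor_ii _ _ _)).symm
    have h1 : ∫ u in (0:ℝ)..(1 - Int.fract x), ((⌊Int.fract x + u⌋ : ℤ) : ℝ)
        = ∫ _ in (0:ℝ)..(1 - Int.fract x), (0:ℝ) := by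
      apply intervalIntegral.integral_congr_ae
      have hns : (volume : Measure ℝ) {1 - Int.fract x} = 0 := measure_singleton _
      filter_upwards [ae_iff.2 (by simpa using hns : (volume : Measure ℝ)
          {u : ℝ | ¬ u ≠ 1 - Int.fract x} = 0)] with u hne hu
      rw [Set.uIoc_of_le (by linarith)] at hu
      have hlt : u < 1 - Int.fract x := lt_of_le_of_ne hu.2 hne
      have : ⌊Int.fract x + u⌋ = 0 := Int.floor_eq_zero_iff.2 ⟨by linarith [hu.1], by linarith⟩
      simp [this]
    have h2 : ∫ u in (1 - Int.fract x)..1, ((⌊Int.fract x + u⌋ : ℤ) : ℝ)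
        = ∫ _ in (1 - Int.fract x)..1, (1:ℝ) := by
      apply intervalIntegral.integral_congr_ae
      filter_upwards with u hu
      rw [Set.uIoc_of_le (by linarith)] at hu
      have : ⌊Int.fract x + u⌋ = 1 := by
        rw [Int.floor_eq_iff]
        constructor
        · push_cast; linarith [hu.1]
        · push_cast; linarith [hu.2]
      simp [this]
    rw [hsplit, h1, h2]
    simp
  calc ∫ u in (0:ℝ)..1, ((⌊x + u⌋ : ℤ) : ℝ)
      = ∫ u in (0:ℝ)..1, (((⌊x⌋ : ℝ)) + ((⌊Int.fract x + u⌋ : ℤ) : ℝ)) := by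
        apply integral_congr
        intro u _
        show ((⌊x + u⌋ : ℤ) : ℝ) = ((⌊x⌋ : ℝ)) + ((⌊Int.fract x + u⌋ : ℤ) : ℝ)
        have hx : x + u = (⌊x⌋ : ℝ) + (Int.fract x + u) := by
          rw [← add_assoc, Int.floor_add_fract]
        rw [hx, Int.floor_intCast_add]
        push_cast
        ring
    _ = (⌊x⌋ : ℝ) + Int.fract x := by
        rw [integral_add (intervalIntegrable_const) (floor_ii (Int.fract x) 0 1), key]
        simp
    _ = x := Int.floor_add_fract x

lemma abs_floor_01 (a b : ℝ) (hba : b ≤ a) :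
    ∫ u in (0:ℝ)..1, |((⌊a + u⌋ : ℤ) : ℝ) - ((⌊b + u⌋ : ℤ) : ℝ)| = a - b := by
  have h1 : ∀ u : ℝ, |((⌊a + u⌋ : ℤ) : ℝ) - ((⌊b + u⌋ : ℤ) : ℝ)|
      = ((⌊a + u⌋ : ℤ) : ℝ) - ((⌊b + u⌋ : ℤ) : ℝ) := by
    intro u
    have : ⌊b + u⌋ ≤ ⌊a + u⌋ := Int.floor_le_floor (by linarith)
    rw [abs_of_nonneg]
    exact_mod_cast sub_nonneg.2 (Int.cast_le.2 this)
  simp_rw [h1]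
  rw [integral_sub (floor_ii a 0 1) (floor_ii b 0 1), floor_int_01, floor_int_01]

lemma abs_floor_01' (a b : ℝ) :
    ∫ u in (0:ℝ)..1, |((⌊a + u⌋ : ℤ) : ℝ) - ((⌊b + u⌋ : ℤ) : ℝ)| = |a - b| := by
  rcases le_total b a with h | h
  · rw [abs_floor_01 a b h, abs_of_nonneg (by linarith)]
  · rw [abs_of_nonpos (by linarith), show -(a-b) = b - a by ring, ← abs_floor_01 b a h]
    congr 1
    ext u
    rw [abs_sub_comm]

lemma dither_int (δ : ℝ) (hδ : 0 < δ) (a b : ℝ) :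
    (1 / δ) * ∫ ξ in (0:ℝ)..δ,
      |δ * ((⌊(a + ξ) / δ⌋ : ℤ) : ℝ) - δ * ((⌊(b + ξ) / δ⌋ : ℤ) : ℝ)| = |a - b| := by
  have hδ' : δ ≠ 0 := ne_of_gt hδ
  have hc := intervalIntegral.integral_comp_mul_left (a := 0) (b := 1)
    (fun ξ => |δ * ((⌊(a + ξ) / δ⌋ : ℤ) : ℝ) - δ * ((⌊(b + ξ) / δ⌋ : ℤ) : ℝ)|) hδ'
  rw [mul_zero, mul_one] at hc
  have hc2 : ∀ x : ℝ, |δ * ((⌊(a + δ * x) / δ⌋ : ℤ) : ℝ) - δ * ((⌊(b + δ * x) / δ⌋ : ℤ) : ℝ)|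
      = δ * |((⌊a / δ + x⌋ : ℤ) : ℝ) - ((⌊b / δ + x⌋ : ℤ) : ℝ)| := by
    intro x
    have e1 : (a + δ * x) / δ = a / δ + x := by field_simp
    have e2 : (b + δ * x) / δ = b / δ + x := by field_simp
    rw [e1, e2, ← mul_sub, abs_mul, abs_of_pos hδ]
  simp only [hc2] at hc
  rw [intervalIntegral.integral_const_mul, abs_floor_01'] at hc
  have : ∫ ξ in (0:ℝ)..δ, |δ * ((⌊(a + ξ) / δ⌋ : ℤ) : ℝ) - δ * ((⌊(b + ξ) / δ⌋ : ℤ) : ℝ)|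
      = δ * (δ * |a / δ - b / δ|) := by
    have h' := (inv_smul_eq_iff₀ hδ').1 hc.symm
    simpa [smul_eq_mul] using h'
  rw [this]
  have : a / δ - b / δ = (a - b) / δ := by ring
  rw [this, abs_div, abs_of_pos hδ]
  field_simp


lemma hasDerivAt_negexp (x : ℝ) :
    HasDerivAt (fun s : ℝ => -exp (-s^2/2)) (x * exp (-x^2/2)) x := by
  have h1 : HasDerivAt (fun s : ℝ => -s^2/2) (-x) x := by
    have := ((hasDerivAt_pow 2 x).neg).div_const 2
    exact this.congr_deriv (by rw [show (2:ℕ) - 1 = 1 from rfl]; push_cast; ring)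
  have := (h1.exp).neg
  exact this.congr_deriv (by ring)

lemma integral_Ioi_mul_exp : ∫ s in Ioi (0:ℝ), s * exp (-s^2 / 2) = 1 := by
  have hint : IntegrableOn (fun s : ℝ => s * exp (-s^2/2)) (Ioi 0) := by
    have := integrable_mul_exp_neg_mul_sq (b := 1/2) (by norm_num)
    have h2 : (fun s : ℝ => s * exp (-s^2/2)) = fun s : ℝ => s * exp (-(1/2) * s^2) := by
      ext s; ring_nf
    rw [h2]
    exact this.integrableOn
  have hbot : Tendsto (fun s : ℝ => -s^2/2) atTop atBot := by
    apply Tendsto.atBot_div_const (by norm_num)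
    exact tendsto_neg_atTop_atBot.comp (tendsto_pow_atTop two_ne_zero)
  have htend : Tendsto (fun s : ℝ => -exp (-s^2/2)) atTop (nhds 0) := by
    rw [show (0:ℝ) = -0 by ring]
    exact (Real.tendsto_exp_atBot.comp hbot).neg
  have := integral_Ioi_of_hasDerivAt_of_tendsto' (f' := fun s : ℝ => s * exp (-s^2/2))
    (fun x _ => hasDerivAt_negexp x) hint htend
  simpa using this

lemma two_inv_sqrt : 2 * (Real.sqrt (2 * π))⁻¹ = Real.sqrt (2 / π) := by
  have h2 : Real.sqrt 2 * Real.sqrt 2 = 2 := Real.mul_self_sqrt (by norm_num)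
  have hπ : (0:ℝ) < Real.sqrt π := Real.sqrt_pos.2 pi_pos
  have h2' : (0:ℝ) < Real.sqrt 2 := Real.sqrt_pos.2 (by norm_num)
  rw [Real.sqrt_div (by norm_num : (0:ℝ) ≤ 2) π, Real.sqrt_mul (by norm_num : (0:ℝ) ≤ 2) π]
  field_simp
  nlinarith [h2, hπ, h2']

lemma abs_gauss_moment : ∫ x : ℝ, |x| * gaussianPDFReal 0 1 x = Real.sqrt (2 / π) := by
  have hpdf : ∀ x : ℝ, |x| * gaussianPDFReal 0 1 x
      = (fun s : ℝ => (Real.sqrt (2 * π))⁻¹ * (s * exp (-s^2/2))) |x| := by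
    intro x
    simp only [gaussianPDFReal, NNReal.coe_one, mul_one, sub_zero]
    rw [← sq_abs x]
    ring
  calc ∫ x : ℝ, |x| * gaussianPDFReal 0 1 x
      = ∫ x : ℝ, (fun s : ℝ => (Real.sqrt (2 * π))⁻¹ * (s * exp (-s^2/2))) |x| := by
        congr 1; ext x; exact hpdf x
    _ = 2 * ∫ x in Ioi (0:ℝ), (Real.sqrt (2 * π))⁻¹ * (x * exp (-x^2/2)) := integral_comp_abs (f := fun s : ℝ => (Real.sqrt (2 * π))⁻¹ * (s * exp (-s^2/2)))
    _ = Real.sqrt (2 / π) := by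
        rw [MeasureTheory.integral_const_mul, integral_Ioi_mul_exp, mul_one, ← two_inv_sqrt]

lemma lintegral_fin_pi_prod {n : ℕ} (f : Fin n → ℝ → ℝ≥0∞) (hf : ∀ i, Measurable (f i)) :
    ∫⁻ x : Fin n → ℝ, ∏ i, f i (x i) ∂(Measure.pi fun _ => (volume : Measure ℝ))
      = ∏ i, ∫⁻ x, f i x := by
  induction n with
  | zero => simp
  | succ n ih =>
      have h := (measurePreserving_piFinSuccAbove (fun _ : Fin (n + 1) => (volume : Measure ℝ))
        0).symm
      have hmeas : Measurable fun x : Fin (n + 1) → ℝ => ∏ i, f i (x i) :=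
        Finset.measurable_prod _ fun i _ => (hf i).comp (measurable_pi_apply i)
      rw [← h.lintegral_comp hmeas]
      simp_rw [MeasurableEquiv.piFinSuccAbove_symm_apply, Fin.insertNthEquiv,
        Fin.prod_univ_succ, Fin.insertNth_zero]
      simp only [Fin.zero_succAbove, cast_eq, Function.comp_def, Fin.cons_zero, Fin.cons_succ,
        Equiv.coe_fn_mk]
      trans ((∫⁻ x, f 0 x) * ∫⁻ y : Fin n → ℝ, ∏ i : Fin n, f (Fin.succ i) (y i)
        ∂(Measure.pi fun _ => (volume : Measure ℝ)))
      · exact lintegral_prod_mul (hf 0).aemeasurable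
          (Finset.measurable_prod _ fun i _ => ((hf (Fin.succ i)).comp
            (measurable_pi_apply i))).aemeasurable
      · rw [ih (fun i => f i.succ) (fun i => hf i.succ)]

lemma pi_gaussian_eq (N : ℕ) :
    (Measure.pi fun _ : Fin N => gaussianReal 0 1)
      = (volume : Measure (Fin N → ℝ)).withDensity
          (fun x => ENNReal.ofReal (∏ i, gaussianPDFReal 0 1 (x i))) := by
  apply Measure.pi_eq
  intro s hs
  have hmeas : Measurable fun y : ℝ => ENNReal.ofReal (gaussianPDFReal 0 1 y) :=
    (measurable_gaussianPDFReal 0 1).ennreal_ofReal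
  rw [withDensity_apply _ (MeasurableSet.univ_pi hs)]
  have hind : ∀ x : Fin N → ℝ,
      (Set.univ.pi s).indicator (fun x => ENNReal.ofReal (∏ i, gaussianPDFReal 0 1 (x i))) x
        = ∏ i, (s i).indicator (fun y => ENNReal.ofReal (gaussianPDFReal 0 1 y)) (x i) := by
    intro x
    by_cases hx : x ∈ Set.univ.pi s
    · rw [Set.indicator_of_mem hx,
        ENNReal.ofReal_prod_of_nonneg (fun i _ => gaussianPDFReal_nonneg 0 1 (x i))]
      exact Finset.prod_congr rfl fun i _ =>
        (Set.indicator_of_mem (hx i (Set.mem_univ i))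
          (fun y => ENNReal.ofReal (gaussianPDFReal 0 1 y))).symm
    · rw [Set.indicator_of_notMem hx]
      rw [Set.mem_univ_pi] at hx
      push_neg at hx
      obtain ⟨i, hi⟩ := hx
      exact (Finset.prod_eq_zero (Finset.mem_univ i)
        (by rw [Set.indicator_of_notMem hi])).symm
  calc ∫⁻ x in Set.univ.pi s, ENNReal.ofReal (∏ i, gaussianPDFReal 0 1 (x i)) ∂volume
      = ∫⁻ x : Fin N → ℝ, ∏ i, (s i).indicator
          (fun y => ENNReal.ofReal (gaussianPDFReal 0 1 y)) (x i) ∂volume := by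
        rw [← lintegral_indicator (MeasurableSet.univ_pi hs)]
        exact lintegral_congr hind
    _ = ∏ i, ∫⁻ y, (s i).indicator (fun y => ENNReal.ofReal (gaussianPDFReal 0 1 y)) y := by
        rw [volume_pi]
        exact lintegral_fin_pi_prod _ (fun i => hmeas.indicator (hs i))
    _ = ∏ i, gaussianReal 0 1 (s i) := by
        refine Finset.prod_congr rfl fun i _ => ?_
        rw [lintegral_indicator (hs i), gaussianReal_apply 0 one_ne_zero (s i)]
        rfl

lemma gauss_pdf_prod (N : ℕ) (y : EuclideanSpace ℝ (Fin N)) :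
    ∏ i, gaussianPDFReal 0 1 (y i)
      = ((Real.sqrt (2 * π))⁻¹) ^ N * exp (-‖y‖ ^ 2 / 2) := by
  simp only [gaussianPDFReal, NNReal.coe_one, mul_one, sub_zero]
  rw [Finset.prod_mul_distrib, Finset.prod_const, ← Real.exp_sum]
  congr 1
  · simp
  · congr 1
    rw [EuclideanSpace.norm_eq, Real.sq_sqrt (Finset.sum_nonneg fun i _ => sq_nonneg _)]
    simp only [Real.norm_eq_abs, sq_abs]
    rw [← Finset.sum_div, ← Finset.sum_neg_distrib]

lemma gauss_abs_inner (N : ℕ) (hN : 1 ≤ N) (w : EuclideanSpace ℝ (Fin N)) :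
    (∫ φ : EuclideanSpace ℝ (Fin N), |(inner ℝ φ w : ℝ)|
        ∂(Measure.map (WithLp.toLp 2) (Measure.pi fun _ : Fin N => gaussianReal 0 1 :
            Measure ((_ : Fin N) → ℝ)) : Measure (EuclideanSpace ℝ (Fin N))))
      = Real.sqrt (2 / π) * ‖w‖ := by
  by_cases hw : w = 0
  · simp only [hw, inner_zero_right, abs_zero, norm_zero, mul_zero]
    exact integral_zero _ _
  -- setup
  set i₀ : Fin N := ⟨0, hN⟩ with hi₀
  set E₀ : EuclideanSpace ℝ (Fin N) := EuclideanSpace.single i₀ (1:ℝ) with hE₀def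
  have hE₀ : ‖E₀‖ = 1 := by rw [hE₀def, EuclideanSpace.norm_single]; norm_num
  set v₀ : EuclideanSpace ℝ (Fin N) := ‖w‖ • E₀ with hv₀def
  have hnorm : ‖v₀‖ = ‖w‖ := by
    rw [hv₀def, norm_smul, hE₀, norm_norm, mul_one]
  set e : EuclideanSpace ℝ (Fin N) ≃ₗᵢ[ℝ] EuclideanSpace ℝ (Fin N) :=
    Submodule.reflection (ℝ ∙ (v₀ - w))ᗮ with he
  have hew : e v₀ = w := Submodule.reflection_sub hnorm
  -- density form
  set p : (Fin N → ℝ) → ℝ≥0 := fun x => (∏ i, gaussianPDFReal 0 1 (x i)).toNNReal with hp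
  have hpmeas : Measurable p := by
    apply Measurable.real_toNNReal
    exact Finset.measurable_prod _ fun i _ =>
      (measurable_gaussianPDFReal 0 1).comp (measurable_pi_apply i)
  have hpval : ∀ x : Fin N → ℝ, (p x : ℝ) = ∏ i, gaussianPDFReal 0 1 (x i) := by
    intro x
    exact Real.coe_toNNReal _ (Finset.prod_nonneg fun i _ => gaussianPDFReal_nonneg 0 1 (x i))
  have hmeq : (Measure.pi fun _ : Fin N => gaussianReal 0 1)
      = (volume : Measure (Fin N → ℝ)).withDensity (fun x => (p x : ℝ≥0∞)) := by
    rw [pi_gaussian_eq N]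
    congr 1
  set F : EuclideanSpace ℝ (Fin N) → ℝ := fun y => |(inner ℝ y w : ℝ)| with hF
  rw [integral_map (WithLp.measurable_toLp 2 _).aemeasurable
    (by fun_prop : Continuous F).aestronglyMeasurable]
  have step1 : (∫ φ : Fin N → ℝ, |(inner ℝ (WithLp.toLp 2 φ) w : ℝ)|
      ∂((volume : Measure (Fin N → ℝ)).withDensity (fun x => (p x : ℝ≥0∞))))
      = ∫ x : Fin N → ℝ, p x • F (WithLp.toLp 2 x) ∂volume :=
    integral_withDensity_eq_integral_smul hpmeas (fun x : Fin N → ℝ => F (WithLp.toLp 2 x))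
  rw [hmeq, step1]
  -- transfer to EuclideanSpace volume
  have hmpE := EuclideanSpace.volume_preserving_symm_measurableEquiv_toLp (Fin N)
  have step2 : (∫ x : Fin N → ℝ, p x • F (WithLp.toLp 2 x) ∂volume)
      = ∫ y : EuclideanSpace ℝ (Fin N), p y • F y ∂volume :=
    (hmpE.integral_comp' (fun x : Fin N → ℝ => p x • F (WithLp.toLp 2 x))).symm
  rw [step2]
  -- rotation
  have hmpe : MeasurePreserving (e.toMeasurableEquiv) (volume : Measure (EuclideanSpace ℝ (Fin N)))
      volume := by
    have := e.measurePreserving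
    rwa [show (⇑e : EuclideanSpace ℝ (Fin N) → EuclideanSpace ℝ (Fin N))
      = ⇑e.toMeasurableEquiv from (e.coe_toMeasurableEquiv).symm] at this
  have step3 : (∫ y : EuclideanSpace ℝ (Fin N), p y • F y ∂volume)
      = ∫ y : EuclideanSpace ℝ (Fin N), p (e y) • F (e y) ∂volume :=
    (hmpe.integral_comp' (fun y => p y • F y)).symm
  rw [step3]
  have hpe : ∀ y : EuclideanSpace ℝ (Fin N), (p (e y) : ℝ) = (p y : ℝ) := by
    intro y
    rw [hpval, hpval, gauss_pdf_prod N (e y), gauss_pdf_prod N y, e.norm_map]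
  have hFe : ∀ y : EuclideanSpace ℝ (Fin N), F (e y) = ‖w‖ * |y i₀| := by
    intro y
    show |(inner ℝ (e y) w : ℝ)| = ‖w‖ * |y i₀|
    rw [← hew, e.inner_map_map, e.norm_map, hnorm, hv₀def, real_inner_smul_right, hE₀def,
      EuclideanSpace.inner_single_right, abs_mul, abs_norm]
    norm_num
  have step4 : (∫ y : EuclideanSpace ℝ (Fin N), p (e y) • F (e y) ∂volume)
      = ‖w‖ * ∫ y : EuclideanSpace ℝ (Fin N), p y • |y i₀| ∂volume := by
    rw [← MeasureTheory.integral_const_mul]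
    congr 1
    ext y
    rw [NNReal.smul_def, NNReal.smul_def, smul_eq_mul, smul_eq_mul, hpe y, hFe y]
    ring
  rw [step4]
  -- back to the pi space and Fubini
  set f : Fin N → ℝ → ℝ := fun i t => (if i = i₀ then |t| else 1) * gaussianPDFReal 0 1 t
    with hf
  have step5 : (∫ y : EuclideanSpace ℝ (Fin N), p y • |y i₀| ∂volume)
      = ∫ x : Fin N → ℝ, ∏ i, f i (x i) ∂volume := by
    have step5a : (∫ y : EuclideanSpace ℝ (Fin N), p y • |y i₀| ∂volume)
        = ∫ x : Fin N → ℝ, p x • |x i₀| ∂volume :=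
      hmpE.integral_comp' (fun x : Fin N → ℝ => p x • |x i₀|)
    rw [step5a]
    congr 1
    ext x
    rw [NNReal.smul_def, smul_eq_mul, hpval, hf]
    simp only []
    rw [Finset.prod_mul_distrib, Finset.prod_ite_eq' Finset.univ i₀ (fun i => |x i|),
      if_pos (Finset.mem_univ i₀)]
    ring
  rw [step5]
  have step6 : (∫ x : Fin N → ℝ, ∏ i, f i (x i) ∂volume) = Real.sqrt (2 / π) := by
    rw [MeasureTheory.integral_fintype_prod_volume_eq_prod f]
    have : ∀ i : Fin N, (∫ t : ℝ, f i t) = if i = i₀ then Real.sqrt (2 / π) else 1 := by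
      intro i
      by_cases hi : i = i₀
      · simp only [hf, hi, if_pos rfl]
        exact abs_gauss_moment
      · simp only [hf, if_neg hi, one_mul]
        exact integral_gaussianPDFReal_eq_one 0 one_ne_zero
    rw [Finset.prod_congr rfl fun i _ => this i,
      Finset.prod_ite_eq' Finset.univ i₀ (fun _ => Real.sqrt (2 / π)),
      if_pos (Finset.mem_univ i₀)]
  rw [step6, mul_comm]


end DitherAux

/-- Expected quantized difference with uniform dithering: for `φ` a standard Gaussian
vector of `ℝ^N`, `ξ` uniform on `[0, δ]` independent of `φ`, and
`Q_δ(λ) = δ⌊λ/δ⌋`, we have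
`E|Q_δ(⟨φ,u⟩ + ξ) − Q_δ(⟨φ,v⟩ + ξ)| = √(2/π) ‖u − v‖₂`. -/
theorem dithered_quantized_expectation (N : ℕ) (hN : 1 ≤ N) (δ : ℝ) (hδ : 0 < δ)
    (u v : EuclideanSpace ℝ (Fin N)) :
    (∫ φ : EuclideanSpace ℝ (Fin N),
        (1 / δ) * ∫ ξ in (0:ℝ)..δ,
          |δ * ((⌊(inner ℝ φ u + ξ) / δ⌋ : ℤ) : ℝ) - δ * ((⌊(inner ℝ φ v + ξ) / δ⌋ : ℤ) : ℝ)|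
        ∂volume
        ∂(Measure.map (WithLp.toLp 2) (Measure.pi fun _ : Fin N => gaussianReal 0 1 :
            Measure ((_ : Fin N) → ℝ)) : Measure (EuclideanSpace ℝ (Fin N))))
      = Real.sqrt (2 / π) * ‖u - v‖ := by
  have hpt : ∀ φ : EuclideanSpace ℝ (Fin N),
      (1 / δ) * (∫ ξ in (0:ℝ)..δ,
          |δ * ((⌊(inner ℝ φ u + ξ) / δ⌋ : ℤ) : ℝ) - δ * ((⌊(inner ℝ φ v + ξ) / δ⌋ : ℤ) : ℝ)|
        ∂volume) = |(inner ℝ φ (u - v) : ℝ)| := by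
    intro φ
    rw [dither_int δ hδ (inner ℝ φ u) (inner ℝ φ v), ← inner_sub_right]
  rw [MeasureTheory.integral_congr_ae (Filter.Eventually.of_forall hpt)]
  exact gauss_abs_inner N hN (u - v)
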